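/- For even positive integers n, the group V_{8n} has exactly 2n + 6 conjugacy classes. -/

import Mathlib

/-- Defining relations of the group
`V_{8n} = ⟨a, b : a^{2n} = b⁴ = 1, ba = a⁻¹b⁻¹, b⁻¹a = a⁻¹b⟩`,
as elements of the free group on two generators. -/
def V8nRels (n : ℕ) : Set (FreeGroup (Fin 2)) :=
  {FreeGroup.of 0 ^ (2 * n), FreeGroup.of 1 ^ 4,
   FreeGroup.of 1 * FreeGroup.of 0 * FreeGroup.of 1 * FreeGroup.of 0,
   (FreeGroup.of 1)⁻¹ * FreeGroup.of 0 * (FreeGroup.of 1)⁻¹ * FreeGroup.of 0}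

/-- The group `V_{8n}` as a presented group. -/
abbrev V8n (n : ℕ) := PresentedGroup (V8nRels n)

/-- The generator `a` of `V_{8n}`. -/
def va (n : ℕ) : V8n n := PresentedGroup.of 0

/-- The generator `b` of `V_{8n}`. -/
def vb (n : ℕ) : V8n n := PresentedGroup.of 1


namespace V8nProof

lemma mem_rels (n : ℕ) {x : FreeGroup (Fin 2)} (hx : x ∈ V8nRels n) :
    PresentedGroup.mk (V8nRels n) x = 1 := by
  have : x ∈ Subgroup.normalClosure (V8nRels n) := Subgroup.subset_normalClosure hx
  exact (QuotientGroup.eq_one_iff x).2 this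

lemma rel_a (n : ℕ) : (va n) ^ (2 * n) = 1 := by
  have := mem_rels (n := n) (x := FreeGroup.of 0 ^ (2 * n)) (by left; rfl)
  simpa [va, PresentedGroup.of, map_pow] using this

lemma rel_b (n : ℕ) : (vb n) ^ 4 = 1 := by
  have := mem_rels (n := n) (x := FreeGroup.of 1 ^ 4) (by right; left; rfl)
  simpa [vb, PresentedGroup.of, map_pow] using this

lemma rel_c (n : ℕ) : vb n * va n * vb n * va n = 1 := by
  have := mem_rels (n := n)
    (x := FreeGroup.of 1 * FreeGroup.of 0 * FreeGroup.of 1 * FreeGroup.of 0)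
    (by right; right; left; rfl)
  simpa [va, vb, PresentedGroup.of, map_mul] using this

lemma rel_d (n : ℕ) : (vb n)⁻¹ * va n * (vb n)⁻¹ * va n = 1 := by
  have := mem_rels (n := n)
    (x := (FreeGroup.of 1)⁻¹ * FreeGroup.of 0 * (FreeGroup.of 1)⁻¹ * FreeGroup.of 0)
    (by right; right; right; rfl)
  simpa [va, vb, PresentedGroup.of, map_mul, map_inv] using this

end V8nProof
open V8nProof

namespace V8nProof2
variable {n : ℕ}

section derived
variable (n)
local notation "a" => va n
local notation "b" => vb n

lemma hb2 : (vb n) ^ 2 * (vb n) ^ 2 = 1 := by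
  have := rel_b n
  rw [← pow_add] at *; norm_num; exact this

lemma hb2_inv : ((vb n) ^ 2)⁻¹ = (vb n) ^ 2 :=
  inv_eq_of_mul_eq_one_right (hb2 n)

lemma h_bab : b * a * b = a⁻¹ := by
  have h := rel_c n
  calc b * a * b = (b * a * b * a) * a⁻¹ := by group
  _ = a⁻¹ := by rw [h]; group

lemma h_b3ab3 : b⁻¹ * a * b⁻¹ = a⁻¹ := by
  have h := rel_d n
  calc b⁻¹ * a * b⁻¹ = (b⁻¹ * a * b⁻¹ * a) * a⁻¹ := by group
  _ = a⁻¹ := by rw [h]; group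

lemma comm_ab2 : Commute (va n) ((vb n) ^ 2) := by
  have h1 := h_bab n
  have h2 := h_b3ab3 n
  have key : b ^ 2 * a * b ^ 2 = a := by
    calc b ^ 2 * a * b ^ 2 = b * (b * a * b) * b := by simp [pow_two, mul_assoc]
    _ = b * (b⁻¹ * a * b⁻¹) * b := by rw [h1, h2]
    _ = a := by group
  show a * b ^ 2 = b ^ 2 * a
  calc a * b ^ 2 = (b ^ 2 * a * b ^ 2) * b ^ 2 := by rw [key]
  _ = b ^ 2 * a * (b ^ 2 * b ^ 2) := by simp [mul_assoc]
  _ = b ^ 2 * a := by rw [hb2 n, mul_one]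

lemma conj_b : b * a * b⁻¹ = a⁻¹ * b ^ 2 := by
  have h1 := h_bab n
  calc b * a * b⁻¹ = (b * a * b) * b⁻¹ * b⁻¹ := by group
  _ = a⁻¹ * (b^2)⁻¹ := by rw [h1]; group
  _ = a⁻¹ * b ^ 2 := by rw [hb2_inv]

lemma key1 (N : ℕ) : b * a ^ N = (a ^ N)⁻¹ * b ^ (2 * N + 1) := by
  have h : b * a ^ N * b⁻¹ = (b * a * b⁻¹) ^ N := (conj_pow).symm
  rw [conj_b] at h
  have h2 : (a⁻¹ * b ^ 2) ^ N = (a⁻¹) ^ N * (b ^ 2) ^ N :=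
    (((comm_ab2 n).inv_left).mul_pow N)
  have : b * a ^ N = (a⁻¹) ^ N * (b ^ 2) ^ N * b := by
    rw [← h2, ← h]; group
  rw [this, inv_pow, ← pow_mul, mul_assoc, ← pow_succ]
end derived
end V8nProof2
set_option linter.unusedSectionVars false
namespace V8nProof3
open V8nProof V8nProof2

variable {n : ℕ} [NeZero n]

/-- `a^i` for `i : ZMod (2*n)`. -/
noncomputable def A (n : ℕ) (i : ZMod (2 * n)) : V8n n := va n ^ i.val
/-- `b^j` for `j : ZMod 4`. -/
noncomputable def B (n : ℕ) (j : ZMod 4) : V8n n := vb n ^ j.val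

variable (n)

lemma Anat (m : ℕ) [NeZero n] : va n ^ m = A n (m : ZMod (2 * n)) := by
  haveI : NeZero (2 * n) := ⟨by have := NeZero.pos n; omega⟩
  rw [A, ZMod.val_natCast, ← pow_eq_pow_mod m (rel_a n)]

lemma Bnat (m : ℕ) : vb n ^ m = B n (m : ZMod 4) := by
  rw [B, ZMod.val_natCast, ← pow_eq_pow_mod m (rel_b n)]

lemma A_add [NeZero n] (i k : ZMod (2 * n)) : A n (i + k) = A n i * A n k := by
  haveI : NeZero (2 * n) := ⟨by have := NeZero.pos n; omega⟩
  have h : ((i.val + k.val : ℕ) : ZMod (2 * n)) = i + k := by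
    push_cast
    rw [ZMod.natCast_val, ZMod.natCast_val, ZMod.cast_id, ZMod.cast_id]
  calc A n (i + k) = va n ^ (i.val + k.val) := by rw [Anat n, h]
  _ = A n i * A n k := by rw [pow_add]; rfl

lemma B_add (j l : ZMod 4) : B n (j + l) = B n j * B n l := by
  have h : ((j.val + l.val : ℕ) : ZMod 4) = j + l := by
    push_cast
    rw [ZMod.natCast_val, ZMod.natCast_val, ZMod.cast_id, ZMod.cast_id]
  calc B n (j + l) = vb n ^ (j.val + l.val) := by rw [Bnat n, h]
  _ = B n j * B n l := by rw [pow_add]; rfl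

lemma A_zero : A n 0 = 1 := by
  haveI : NeZero (2 * n) := ⟨by have := NeZero.pos n; omega⟩
  rw [A, ZMod.val_zero, pow_zero]

lemma B_zero : B n 0 = 1 := by rw [B, ZMod.val_zero, pow_zero]

lemma A_inv (i : ZMod (2 * n)) : (A n i)⁻¹ = A n (-i) := by
  apply inv_eq_of_mul_eq_one_right
  rw [← A_add, add_neg_cancel, A_zero]

lemma B_inv (j : ZMod 4) : (B n j)⁻¹ = B n (-j) := by
  apply inv_eq_of_mul_eq_one_right
  rw [← B_add, add_neg_cancel, B_zero]

lemma swapBpow (m : ℕ) (i : ZMod (2 * n)) :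
    ∃ i' j', vb n ^ m * A n i = A n i' * B n j' := by
  induction m generalizing i with
  | zero => exact ⟨i, 0, by rw [pow_zero, one_mul, B_zero, mul_one]⟩
  | succ m ih =>
    have h1 : vb n * A n i = (A n i)⁻¹ * vb n ^ (2 * i.val + 1) := key1 n i.val
    obtain ⟨i', j', hij⟩ := ih (-i)
    refine ⟨i', j' + ((2 * i.val + 1 : ℕ) : ZMod 4), ?_⟩
    calc vb n ^ (m + 1) * A n i = vb n ^ m * (vb n * A n i) := by rw [pow_succ, mul_assoc]
    _ = vb n ^ m * (A n (-i) * vb n ^ (2 * i.val + 1)) := by rw [h1, A_inv]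
    _ = (vb n ^ m * A n (-i)) * vb n ^ (2 * i.val + 1) := by rw [mul_assoc]
    _ = A n i' * B n j' * B n ((2 * i.val + 1 : ℕ) : ZMod 4) := by rw [hij, Bnat]
    _ = A n i' * B n (j' + ((2 * i.val + 1 : ℕ) : ZMod 4)) := by rw [B_add, mul_assoc]

lemma swapB (j : ZMod 4) (i : ZMod (2 * n)) :
    ∃ i' j', B n j * A n i = A n i' * B n j' := swapBpow n j.val i

lemma normal_form (x : V8n n) : ∃ i j, x = A n i * B n j := by
  haveI : NeZero (2 * n) := ⟨by have := NeZero.pos n; omega⟩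
  have hx : x ∈ Subgroup.closure (Set.range (PresentedGroup.of :
      Fin 2 → V8n n)) := by
    rw [PresentedGroup.closure_range_of]; trivial
  induction hx using Subgroup.closure_induction with
  | mem g hg =>
    obtain ⟨v, rfl⟩ := hg
    fin_cases v
    · refine ⟨1, 0, ?_⟩
      rw [B_zero, mul_one]
      show va n = A n 1
      haveI : Fact (1 < 2 * n) := ⟨by have := NeZero.pos n; omega⟩
      rw [A, ZMod.val_one, pow_one]
    · refine ⟨0, 1, ?_⟩
      rw [A_zero, one_mul]
      show vb n = B n 1
      haveI : Fact (1 < 4) := ⟨by omega⟩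
      rw [B, ZMod.val_one, pow_one]
  | one => exact ⟨0, 0, by rw [A_zero, B_zero, one_mul]⟩
  | mul x y _ _ hx hy =>
    obtain ⟨i, j, rfl⟩ := hx
    obtain ⟨k, l, rfl⟩ := hy
    obtain ⟨k', j', hs⟩ := swapB n j k
    refine ⟨i + k', j' + l, ?_⟩
    calc A n i * B n j * (A n k * B n l) = A n i * (B n j * A n k) * B n l := by
          simp [mul_assoc]
    _ = A n i * (A n k' * B n j') * B n l := by rw [hs]
    _ = A n (i + k') * B n (j' + l) := by rw [A_add, B_add]; simp [mul_assoc]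
  | inv x _ hx =>
    obtain ⟨i, j, rfl⟩ := hx
    obtain ⟨i', j', hs⟩ := swapB n (-j) (-i)
    exact ⟨i', j', by rw [mul_inv_rev, A_inv, B_inv, hs]⟩

lemma surjNF : Function.Surjective (fun p : ZMod (2 * n) × ZMod 4 => A n p.1 * B n p.2) :=
  fun x => by obtain ⟨i, j, h⟩ := normal_form n x; exact ⟨(i, j), h.symm⟩

lemma finiteV : Finite (V8n n) := Finite.of_surjective _ (surjNF n)

lemma cardV_le : Nat.card (V8n n) ≤ 8 * n := by
  haveI : NeZero (2 * n) := ⟨by have := NeZero.pos n; omega⟩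
  have h1 := Nat.card_le_card_of_surjective _ (surjNF n)
  have hp : Nat.card (ZMod (2 * n) × ZMod 4) = 8 * n := by
    rw [Nat.card_prod, Nat.card_zmod, Nat.card_zmod]; ring
  omega

end V8nProof3
namespace V8nProof4
open DihedralGroup

variable (n : ℕ)

abbrev P4 (n : ℕ) := DihedralGroup (2 * n) × Multiplicative (ZMod 4)

def sig : DihedralGroup (2 * n) → ZMod 2
  | .r i => ZMod.castHom (dvd_mul_right 2 n) (ZMod 2) i
  | .sr i => ZMod.castHom (dvd_mul_right 2 n) (ZMod 2) i + 1

lemma sig_r (i : ZMod (2 * n)) : sig n (.r i) = ZMod.castHom (dvd_mul_right 2 n) (ZMod 2) i := rfl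
lemma sig_sr (i : ZMod (2 * n)) :
    sig n (.sr i) = ZMod.castHom (dvd_mul_right 2 n) (ZMod 2) i + 1 := rfl

lemma sig_one : sig n 1 = 0 := by rw [one_def, sig_r, map_zero]

lemma sig_mul (x y : DihedralGroup (2 * n)) : sig n (x * y) = sig n x + sig n y := by
  have h2 : ∀ u v : ZMod 2, v - u = v + u := by decide
  have h3 : ∀ u v : ZMod 2, v - u = u + 1 + (v + 1) := by decide
  cases x with
  | r i =>
    cases y with
    | r j => rw [r_mul_r, sig_r, sig_r, sig_r, map_add]
    | sr j => rw [r_mul_sr, sig_sr, sig_r, sig_sr, map_sub, h2]; ring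
  | sr i =>
    cases y with
    | r j => rw [sr_mul_r, sig_sr, sig_sr, sig_r, map_add]; ring
    | sr j => rw [sr_mul_sr, sig_r, sig_sr, sig_sr, map_sub, h3]

def cast42 : ZMod 4 →+* ZMod 2 := ZMod.castHom (show 2 ∣ 4 by norm_num) (ZMod 2)

def dd : P4 n →* Multiplicative (ZMod 2) where
  toFun p := Multiplicative.ofAdd (sig n p.1 + cast42 p.2.toAdd)
  map_one' := by
    show Multiplicative.ofAdd (sig n 1 + cast42 (Multiplicative.toAdd 1)) = 1
    rw [sig_one, toAdd_one, map_zero, add_zero, ofAdd_zero]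
  map_mul' p q := by
    have h : sig n (p.1 * q.1) + cast42 (Multiplicative.toAdd (p.2 * q.2))
        = (sig n p.1 + cast42 (Multiplicative.toAdd p.2)) +
          (sig n q.1 + cast42 (Multiplicative.toAdd q.2)) := by
      rw [sig_mul, toAdd_mul, cast42.map_add]; ring
    show Multiplicative.ofAdd (sig n (p.1 * q.1) + cast42 (Multiplicative.toAdd (p.2 * q.2)))
      = Multiplicative.ofAdd (sig n p.1 + cast42 (Multiplicative.toAdd p.2)) *
        Multiplicative.ofAdd (sig n q.1 + cast42 (Multiplicative.toAdd q.2))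
    rw [h, ofAdd_add]

lemma inv_r (i : ZMod (2 * n)) : (DihedralGroup.r i)⁻¹ = DihedralGroup.r (-i) :=
  inv_eq_of_mul_eq_one_right (by rw [r_mul_r, add_neg_cancel, one_def])

lemma inv_sr (i : ZMod (2 * n)) : (DihedralGroup.sr i)⁻¹ = DihedralGroup.sr i :=
  inv_eq_of_mul_eq_one_right (sr_mul_self i)

def gens : Fin 2 → P4 n :=
  ![(DihedralGroup.r 1, Multiplicative.ofAdd (1 : ZMod 4)),
    (DihedralGroup.sr 0, Multiplicative.ofAdd (1 : ZMod 4))]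

lemma gens_rels (hev : Even n) : ∀ w ∈ V8nRels n, FreeGroup.lift (gens n) w = 1 := by
  have h4 : ∀ m : ℕ, 4 ∣ m → (Multiplicative.ofAdd (1 : ZMod 4)) ^ m = 1 := by
    intro m hm
    have : ((m : ℕ) : ZMod 4) = 0 := (ZMod.natCast_eq_zero_iff m 4).2 hm
    rw [← ofAdd_nsmul, nsmul_eq_mul, mul_one, this, ofAdd_zero]
  intro w hw
  rcases hw with rfl | rfl | rfl | rfl
  · obtain ⟨t, rfl⟩ := hev
    rw [map_pow, FreeGroup.lift_apply_of]
    show ((DihedralGroup.r 1, Multiplicative.ofAdd (1 : ZMod 4)) : P4 (t + t)) ^ (2 * (t + t)) = 1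
    rw [Prod.pow_mk, Prod.mk_eq_one]
    constructor
    · rw [r_one_pow, ZMod.natCast_self, ← one_def]
    · exact h4 _ ⟨t, by ring⟩
  · rw [map_pow, FreeGroup.lift_apply_of]
    show ((DihedralGroup.sr 0, Multiplicative.ofAdd (1 : ZMod 4)) : P4 n) ^ 4 = 1
    rw [Prod.pow_mk, Prod.mk_eq_one]
    constructor
    · show (DihedralGroup.sr 0 : DihedralGroup (2*n)) ^ 4 = 1
      rw [show (4:ℕ) = 2 + 2 from rfl, pow_add, pow_two, sr_mul_self, one_mul]
    · exact h4 4 dvd_rfl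
  · simp only [map_mul, FreeGroup.lift_apply_of]
    show ((DihedralGroup.sr 0, Multiplicative.ofAdd (1 : ZMod 4)) : P4 n) *
      (DihedralGroup.r 1, Multiplicative.ofAdd (1 : ZMod 4)) *
      (DihedralGroup.sr 0, Multiplicative.ofAdd (1 : ZMod 4)) *
      (DihedralGroup.r 1, Multiplicative.ofAdd (1 : ZMod 4)) = 1
    refine Prod.ext ?_ ?_
    · show DihedralGroup.sr 0 * DihedralGroup.r 1 * DihedralGroup.sr 0 * DihedralGroup.r 1 = 1
      rw [sr_mul_r, zero_add, sr_mul_sr, r_mul_r,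
        show (0 : ZMod (2*n)) - 1 + 1 = 0 by ring]
      exact one_def.symm
    · show Multiplicative.ofAdd (1 : ZMod 4) * Multiplicative.ofAdd 1 * Multiplicative.ofAdd 1 *
        Multiplicative.ofAdd 1 = 1
      decide
  · simp only [map_mul, map_inv, FreeGroup.lift_apply_of]
    show ((DihedralGroup.sr 0, Multiplicative.ofAdd (1 : ZMod 4)) : P4 n)⁻¹ *
      (DihedralGroup.r 1, Multiplicative.ofAdd (1 : ZMod 4)) *
      (DihedralGroup.sr 0, Multiplicative.ofAdd (1 : ZMod 4))⁻¹ *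
      (DihedralGroup.r 1, Multiplicative.ofAdd (1 : ZMod 4)) = 1
    refine Prod.ext ?_ ?_
    · show (DihedralGroup.sr 0)⁻¹ * DihedralGroup.r 1 * (DihedralGroup.sr 0)⁻¹ *
        DihedralGroup.r 1 = 1
      rw [inv_sr, sr_mul_r, zero_add, sr_mul_sr, r_mul_r,
        show (0 : ZMod (2*n)) - 1 + 1 = 0 by ring]
      exact one_def.symm
    · show (Multiplicative.ofAdd (1 : ZMod 4))⁻¹ * Multiplicative.ofAdd 1 *
        (Multiplicative.ofAdd 1)⁻¹ * Multiplicative.ofAdd 1 = 1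
      decide

end V8nProof4
namespace V8nProof5
open DihedralGroup V8nProof V8nProof2 V8nProof3 V8nProof4

variable (n : ℕ) [NeZero n] (hev : Even n)

noncomputable def phi : V8n n →* P4 n := PresentedGroup.toGroup (gens_rels n hev)

lemma phi_a : phi n hev (va n) = (DihedralGroup.r 1, Multiplicative.ofAdd (1 : ZMod 4)) :=
  PresentedGroup.toGroup.of (gens_rels n hev)

lemma phi_b : phi n hev (vb n) = (DihedralGroup.sr 0, Multiplicative.ofAdd (1 : ZMod 4)) :=
  PresentedGroup.toGroup.of (gens_rels n hev)

lemma dd_apply (p : P4 n) :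
    dd n p = Multiplicative.ofAdd (sig n p.1 + cast42 (Multiplicative.toAdd p.2)) := rfl

lemma haveNeZero2n : NeZero (2 * n) := ⟨by have := NeZero.pos n; omega⟩

lemma phi_mem_ker (x : V8n n) : phi n hev x ∈ (dd n).ker := by
  have key : (dd n).comp (phi n hev) = 1 := by
    apply PresentedGroup.ext
    intro v
    fin_cases v
    · show dd n (phi n hev (va n)) = 1
      rw [phi_a, dd_apply]
      show Multiplicative.ofAdd (sig n (DihedralGroup.r 1) + cast42 1) = 1
      rw [sig_r, map_one, map_one]
      decide
    · show dd n (phi n hev (vb n)) = 1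
      rw [phi_b, dd_apply]
      show Multiplicative.ofAdd (sig n (DihedralGroup.sr 0) + cast42 1) = 1
      rw [sig_sr, map_zero, map_one]
      decide
  show dd n (phi n hev x) = 1
  have := congrArg (fun f => f x) key  -- (dd.comp phi) x = 1 x
  simpa using this

noncomputable def phi' : V8n n →* (dd n).ker :=
  (phi n hev).codRestrict _ (phi_mem_ker n hev)

lemma zmod42 : ∀ t : ZMod 4, cast42 t = 0 → t = 0 ∨ t = 2 := by decide

lemma cast_i_eq (i : ZMod (2 * n)) :
    ZMod.castHom (dvd_mul_right 2 n) (ZMod 2) i = ((i.val : ℕ) : ZMod 2) := by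
  haveI := haveNeZero2n n
  rw [ZMod.castHom_apply, ← ZMod.natCast_val]

lemma phi_pow_a (N : ℕ) :
    phi n hev (va n ^ N) = (DihedralGroup.r (N : ZMod (2 * n)),
      Multiplicative.ofAdd ((N : ℕ) : ZMod 4)) := by
  rw [map_pow, phi_a, Prod.pow_mk, r_one_pow]
  congr 1
  rw [← ofAdd_nsmul, nsmul_eq_mul, mul_one]

lemma phi_pow_b2 (t : ZMod 4) (ht : t = 0 ∨ t = 2) :
    phi n hev (vb n ^ t.val) = (1, Multiplicative.ofAdd t) := by
  rcases ht with rfl | rfl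
  · show phi n hev (vb n ^ (0:ℕ)) = _
    rw [pow_zero, map_one, ofAdd_zero]
    rfl
  · show phi n hev (vb n ^ (2:ℕ)) = _
    rw [map_pow, phi_b, Prod.pow_mk, pow_two, sr_mul_self]
    rfl

lemma phi'_surj : Function.Surjective (phi' n hev) := by
  haveI := haveNeZero2n n
  rintro ⟨⟨x, k⟩, hk⟩
  have hk' : sig n x + cast42 (Multiplicative.toAdd k) = 0 := by
    have h1 : dd n (x, k) = 1 := hk
    rw [dd_apply] at h1
    exact ofAdd_eq_one.mp h1
  cases x with
  | r i =>
    set N := i.val with hN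
    set t : ZMod 4 := Multiplicative.toAdd k - (N : ZMod 4) with htdef
    have ht : t = 0 ∨ t = 2 := by
      apply zmod42
      rw [htdef, map_sub, map_natCast]
      rw [sig_r, cast_i_eq] at hk'
      have : ∀ u v : ZMod 2, u + v = 0 → v - u = 0 := by decide
      exact this _ _ hk'
    refine ⟨va n ^ N * vb n ^ t.val, ?_⟩
    apply Subtype.ext
    show phi n hev (va n ^ N * vb n ^ t.val) = (DihedralGroup.r i, k)
    rw [map_mul, phi_pow_a, phi_pow_b2 n hev t ht, Prod.mk_mul_mk, mul_one, ← ofAdd_add]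
    refine Prod.ext ?_ ?_
    · show DihedralGroup.r (N : ZMod (2 * n)) = DihedralGroup.r i
      rw [hN, ZMod.natCast_rightInverse i]
    · show Multiplicative.ofAdd ((N : ZMod 4) + t) = k
      rw [htdef, add_sub_cancel, ofAdd_toAdd]
  | sr i =>
    set N := i.val with hN
    set t : ZMod 4 := Multiplicative.toAdd k - (N : ZMod 4) - 1 with htdef
    have ht : t = 0 ∨ t = 2 := by
      apply zmod42
      rw [htdef, map_sub, map_sub, map_natCast, map_one]
      rw [sig_sr, cast_i_eq] at hk'
      have : ∀ u v : ZMod 2, u + 1 + v = 0 → v - u - 1 = 0 := by decide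
      exact this _ _ hk'
    refine ⟨vb n * va n ^ N * vb n ^ t.val, ?_⟩
    apply Subtype.ext
    show phi n hev (vb n * va n ^ N * vb n ^ t.val) = (DihedralGroup.sr i, k)
    rw [map_mul, map_mul, phi_pow_a, phi_pow_b2 n hev t ht, phi_b,
      Prod.mk_mul_mk, Prod.mk_mul_mk, mul_one, ← ofAdd_add, ← ofAdd_add]
    refine Prod.ext ?_ ?_
    · show DihedralGroup.sr 0 * DihedralGroup.r (N : ZMod (2 * n)) = DihedralGroup.sr i
      rw [sr_mul_r, zero_add, hN, ZMod.natCast_rightInverse i]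
    · show Multiplicative.ofAdd (1 + (N : ZMod 4) + t) = k
      rw [htdef]
      rw [show (1 : ZMod 4) + N + (Multiplicative.toAdd k - N - 1) = Multiplicative.toAdd k
        by ring, ofAdd_toAdd]

lemma dd_surj : Function.Surjective (dd n) := by
  intro z
  refine ⟨(1, Multiplicative.ofAdd (((Multiplicative.toAdd z).val : ℕ) : ZMod 4)), ?_⟩
  rw [dd_apply]
  show Multiplicative.ofAdd (sig n 1 + cast42 _) = z
  rw [sig_one, zero_add, toAdd_ofAdd, map_natCast, ZMod.natCast_rightInverse]
  exact ofAdd_toAdd z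

lemma cardP : Nat.card (P4 n) = 16 * n := by
  haveI := haveNeZero2n n
  rw [Nat.card_prod, DihedralGroup.nat_card, Nat.card_congr Multiplicative.toAdd, Nat.card_zmod]
  ring

lemma card_ker : Nat.card (dd n).ker = 8 * n := by
  haveI := haveNeZero2n n
  have h := Subgroup.card_eq_card_quotient_mul_card_subgroup ((dd n).ker)
  have hq : Nat.card (P4 n ⧸ (dd n).ker) = 2 := by
    rw [Nat.card_congr (QuotientGroup.quotientKerEquivOfSurjective _ (dd_surj n)).toEquiv,
      Nat.card_congr Multiplicative.toAdd, Nat.card_zmod]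
  rw [cardP, hq] at h
  omega

lemma phi'_bij : Function.Bijective (phi' n hev) := by
  haveI := finiteV n
  rw [Nat.bijective_iff_surjective_and_card]
  refine ⟨phi'_surj n hev, ?_⟩
  have h1 := cardV_le n
  have h2 := Nat.card_le_card_of_surjective _ (phi'_surj n hev)
  have h3 := card_ker n
  omega

noncomputable def eqV : V8n n ≃* (dd n).ker := MulEquiv.ofBijective _ (phi'_bij n hev)

end V8nProof5
namespace V8nProof6
open DihedralGroup V8nProof4 V8nProof5

variable (n : ℕ) [NeZero n]

abbrev T' (n : ℕ) := (Fin (n + 1) ⊕ ZMod 2) × ZMod 2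

def wD : DihedralGroup (2 * n) → Fin (n + 1) ⊕ ZMod 2
  | .r i => .inl ⟨min i.val (2 * n - i.val), by omega⟩
  | .sr i => .inr (ZMod.castHom (dvd_mul_right 2 n) (ZMod 2) i)

lemma wD_r (i : ZMod (2 * n)) :
    wD n (.r i) = .inl ⟨min i.val (2 * n - i.val), by omega⟩ := rfl
lemma wD_sr (i : ZMod (2 * n)) :
    wD n (.sr i) = .inr (ZMod.castHom (dvd_mul_right 2 n) (ZMod 2) i) := rfl

def hb (k : Multiplicative (ZMod 4)) : ZMod 2 := (((Multiplicative.toAdd k).val / 2 : ℕ) : ZMod 2)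

def invar (p : P4 n) : T' n := (wD n p.1, hb p.2)

lemma wD_r_neg (i : ZMod (2 * n)) : wD n (.r (-i)) = wD n (.r i) := by
  haveI := haveNeZero2n n
  rcases eq_or_ne i 0 with rfl | hi
  · rw [neg_zero]
  · rw [wD_r, wD_r]
    have hv := ZMod.val_lt i
    have h0 : i.val ≠ 0 := fun h => hi (by
      have := ZMod.natCast_rightInverse i
      rw [h] at this
      simpa using this.symm)
    simp only [ZMod.neg_val, if_neg hi]
    congr 1
    apply Fin.ext
    show min (2 * n - i.val) (2 * n - (2 * n - i.val)) = min i.val (2 * n - i.val)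
    omega

lemma invar_conj (g x : P4 n) : invar n (g * x * g⁻¹) = invar n x := by
  haveI := haveNeZero2n n
  obtain ⟨g1, g2⟩ := g
  obtain ⟨x1, x2⟩ := x
  have hadd : ∀ u v : ZMod 2, u - v + -v = u := by decide
  have hsub : ∀ u v : ZMod 2, v - (u - v) = u := by decide
  refine Prod.ext ?_ ?_
  · show wD n (g1 * x1 * g1⁻¹) = wD n x1
    cases g1 with
    | r j =>
      cases x1 with
      | r i =>
        rw [V8nProof4.inv_r, r_mul_r, r_mul_r, show j + i + -j = i by ring]
      | sr i =>
        rw [V8nProof4.inv_r, r_mul_sr, sr_mul_r, wD_sr, wD_sr]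
        congr 1
        rw [map_add, map_neg, map_sub]
        exact hadd _ _
    | sr j =>
      cases x1 with
      | r i =>
        rw [V8nProof4.inv_sr, sr_mul_r, sr_mul_sr, show j - (j + i) = -i by ring, wD_r_neg]
      | sr i =>
        rw [V8nProof4.inv_sr, sr_mul_sr, r_mul_sr, wD_sr, wD_sr]
        congr 1
        rw [map_sub, map_sub]
        exact hsub _ _
  · show hb (g2 * x2 * g2⁻¹) = hb x2
    rw [mul_comm g2 x2, mul_assoc, mul_inv_cancel, mul_one]

lemma mem_ker_iff (p : P4 n) :
    p ∈ (dd n).ker ↔ sig n p.1 + cast42 (Multiplicative.toAdd p.2) = 0 := by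
  rw [MonoidHom.mem_ker, dd_apply]
  exact ⟨fun h => ofAdd_eq_one.mp h, fun h => by rw [h, ofAdd_zero]⟩

lemma sig_of_wD {x y : DihedralGroup (2 * n)} (h : wD n x = wD n y) : sig n x = sig n y := by
  haveI := haveNeZero2n n
  cases x with
  | r i =>
    cases y with
    | r j =>
      rw [wD_r, wD_r] at h
      simp only [Sum.inl.injEq, Fin.mk.injEq] at h
      rw [sig_r, sig_r, cast_i_eq, cast_i_eq]
      have hvi := ZMod.val_lt i
      have hvj := ZMod.val_lt j
      rw [ZMod.natCast_eq_natCast_iff']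
      omega
    | sr j => exact absurd h (by rw [wD_r, wD_sr]; simp)
  | sr i =>
    cases y with
    | r j => exact absurd h (by rw [wD_r, wD_sr]; simp)
    | sr j =>
      rw [wD_sr, wD_sr] at h
      simp only [Sum.inr.injEq] at h
      rw [sig_sr, sig_sr, h]

lemma k_eq_of {k l : Multiplicative (ZMod 4)} (h1 : cast42 (Multiplicative.toAdd k) =
    cast42 (Multiplicative.toAdd l)) (h2 : hb k = hb l) : k = l := by
  have key : ∀ u v : ZMod 4, cast42 u = cast42 v →
      ((u.val / 2 : ℕ) : ZMod 2) = ((v.val / 2 : ℕ) : ZMod 2) → u = v := by decide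
  have := key _ _ h1 h2
  calc k = Multiplicative.ofAdd (Multiplicative.toAdd k) := rfl
  _ = Multiplicative.ofAdd (Multiplicative.toAdd l) := by rw [this]
  _ = l := rfl

end V8nProof6
namespace V8nProof7
open DihedralGroup V8nProof4 V8nProof5 V8nProof6

variable (n : ℕ) [NeZero n]

lemma k_parity {x1 : DihedralGroup (2 * n)} {k : Multiplicative (ZMod 4)}
    (hk : (x1, k) ∈ (dd n).ker) :
    cast42 (Multiplicative.toAdd k) = sig n x1 := by
  rw [mem_ker_iff] at hk
  have : ∀ u v : ZMod 2, u + v = 0 → v = u := by decide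
  exact this _ _ hk

lemma sr0_mem : ((DihedralGroup.sr 0, Multiplicative.ofAdd (1 : ZMod 4)) : P4 n) ∈ (dd n).ker := by
  rw [mem_ker_iff]
  show sig n (DihedralGroup.sr 0) + cast42 (1 : ZMod 4) = 0
  rw [sig_sr, map_zero, map_one]
  decide

lemma invar_sep (x y : P4 n) (hx : x ∈ (dd n).ker) (hy : y ∈ (dd n).ker)
    (h : invar n x = invar n y) : ∃ g ∈ (dd n).ker, g * x * g⁻¹ = y := by
  haveI := haveNeZero2n n
  obtain ⟨x1, k⟩ := x
  obtain ⟨y1, l⟩ := y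
  have hw : wD n x1 = wD n y1 := congrArg Prod.fst h
  have hhb : hb k = hb l := congrArg Prod.snd h
  have hkl : k = l := by
    apply k_eq_of
    · rw [k_parity n hx, k_parity n hy]
      exact sig_of_wD n hw
    · exact hhb
  subst hkl
  cases x1 with
  | r i =>
    cases y1 with
    | r j =>
      rw [wD_r, wD_r] at hw
      simp only [Sum.inl.injEq, Fin.mk.injEq] at hw
      have hvi := ZMod.val_lt i
      have hvj := ZMod.val_lt j
      have hcase : i.val = j.val ∨ i.val + j.val = 2 * n := by omega
      rcases hcase with hc | hc
      · have : i = j := ZMod.val_injective _ hc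
        subst this
        exact ⟨1, (dd n).ker.one_mem, by rw [one_mul, inv_one, mul_one]⟩
      · have hij : j = -i := by
          have h1 : ((i.val + j.val : ℕ) : ZMod (2 * n)) = 0 := by
            rw [hc, ZMod.natCast_self]
          rw [Nat.cast_add, ZMod.natCast_rightInverse i, ZMod.natCast_rightInverse j] at h1
          exact eq_neg_of_add_eq_zero_right h1
        refine ⟨(DihedralGroup.sr 0, Multiplicative.ofAdd (1 : ZMod 4)), sr0_mem n, ?_⟩
        rw [Prod.inv_mk, Prod.mk_mul_mk, Prod.mk_mul_mk]
        refine Prod.ext ?_ ?_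
        · show DihedralGroup.sr 0 * DihedralGroup.r i * (DihedralGroup.sr 0)⁻¹ = DihedralGroup.r j
          rw [V8nProof4.inv_sr, sr_mul_r, zero_add, sr_mul_sr, zero_sub, hij]
        · show Multiplicative.ofAdd (1 : ZMod 4) * k * (Multiplicative.ofAdd (1 : ZMod 4))⁻¹ = k
          rw [mul_comm, ← mul_assoc, inv_mul_cancel, one_mul]
    | sr j => exact absurd hw (by rw [wD_r, wD_sr]; simp)
  | sr i =>
    cases y1 with
    | r j => exact absurd hw (by rw [wD_r, wD_sr]; simp)
    | sr j =>
      rw [wD_sr, wD_sr] at hw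
      simp only [Sum.inr.injEq] at hw
      -- find t with 2 * t = i - j
      have hd : 2 ∣ (i - j).val := by
        have h0 : ZMod.castHom (dvd_mul_right 2 n) (ZMod 2) (i - j) = 0 := by
          rw [map_sub, hw, sub_self]
        rw [cast_i_eq] at h0
        exact (ZMod.natCast_eq_zero_iff _ 2).1 h0
      set t : ZMod (2 * n) := (((i - j).val / 2 : ℕ) : ZMod (2 * n)) with ht
      have h2t : 2 * t = i - j := by
        have hcast : ((2 * ((i - j).val / 2) : ℕ) : ZMod (2 * n)) = i - j := by
          rw [Nat.mul_div_cancel' hd, ZMod.natCast_rightInverse]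
        calc 2 * t = ((2 * ((i - j).val / 2) : ℕ) : ZMod (2 * n)) := by
              rw [ht]; push_cast; ring
        _ = i - j := hcast
      refine ⟨(DihedralGroup.r t, Multiplicative.ofAdd ((t.val : ℕ) : ZMod 4)), ?_, ?_⟩
      · rw [mem_ker_iff]
        show sig n (DihedralGroup.r t) + cast42 ((t.val : ℕ) : ZMod 4) = 0
        rw [sig_r, cast_i_eq, map_natCast]
        have : ∀ u : ZMod 2, u + u = 0 := by decide
        exact this _
      · rw [Prod.inv_mk, Prod.mk_mul_mk, Prod.mk_mul_mk]
        refine Prod.ext ?_ ?_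
        · show DihedralGroup.r t * DihedralGroup.sr i * (DihedralGroup.r t)⁻¹ =
            DihedralGroup.sr j
          rw [V8nProof4.inv_r, r_mul_sr, sr_mul_r]
          congr 1
          have : i - t + -t = i - 2 * t := by ring
          rw [this, h2t]
          ring
        · show Multiplicative.ofAdd ((t.val : ℕ) : ZMod 4) * k *
            (Multiplicative.ofAdd ((t.val : ℕ) : ZMod 4))⁻¹ = k
          rw [mul_comm, ← mul_assoc, inv_mul_cancel, one_mul]

lemma invar_surj (c : T' n) : ∃ p ∈ (dd n).ker, invar n p = c := by
  haveI := haveNeZero2n n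
  have hn1 : 1 ≤ n := NeZero.pos n
  obtain ⟨w, h⟩ := c
  have hhval := ZMod.val_lt h
  cases w with
  | inl c =>
    have hc : (c : ℕ) ≤ n := Nat.lt_succ_iff.1 c.isLt
    refine ⟨(DihedralGroup.r ((c : ℕ) : ZMod (2 * n)),
      Multiplicative.ofAdd (((c : ℕ) % 2 + 2 * h.val : ℕ) : ZMod 4)), ?_, ?_⟩
    · rw [mem_ker_iff]
      show sig n _ + cast42 _ = 0
      rw [sig_r, cast_i_eq, toAdd_ofAdd, map_natCast, ZMod.val_natCast_of_lt (by omega)]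
      have hmod : (((c : ℕ) % 2 + 2 * h.val : ℕ) : ZMod 2) = ((c : ℕ) : ZMod 2) := by
        rw [ZMod.natCast_eq_natCast_iff']
        omega
      rw [hmod]
      have : ∀ u : ZMod 2, u + u = 0 := by decide
      exact this _
    · refine Prod.ext ?_ ?_
      · show wD n (.r ((c : ℕ) : ZMod (2 * n))) = Sum.inl c
        rw [wD_r]
        congr 1
        apply Fin.ext
        show min (((c : ℕ) : ZMod (2*n)).val) (2 * n - ((c : ℕ) : ZMod (2*n)).val) = (c : ℕ)
        rw [ZMod.val_natCast_of_lt (by omega)]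
        omega
      · show hb (Multiplicative.ofAdd (((c : ℕ) % 2 + 2 * h.val : ℕ) : ZMod 4)) = h
        rw [hb, toAdd_ofAdd, ZMod.val_natCast_of_lt (by omega)]
        have : ((c : ℕ) % 2 + 2 * h.val) / 2 = h.val := by omega
        rw [this, ZMod.natCast_rightInverse]
  | inr e =>
    have heval := ZMod.val_lt e
    refine ⟨(DihedralGroup.sr ((e.val : ℕ) : ZMod (2 * n)),
      Multiplicative.ofAdd (((e.val + 1) % 2 + 2 * h.val : ℕ) : ZMod 4)), ?_, ?_⟩
    · rw [mem_ker_iff]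
      show sig n _ + cast42 _ = 0
      rw [sig_sr, cast_i_eq, toAdd_ofAdd, map_natCast, ZMod.val_natCast_of_lt (by omega)]
      have hmod : (((e.val + 1) % 2 + 2 * h.val : ℕ) : ZMod 2) = ((e.val + 1 : ℕ) : ZMod 2) := by
        rw [ZMod.natCast_eq_natCast_iff']
        omega
      rw [hmod, Nat.cast_add, Nat.cast_one]
      have : ∀ u : ZMod 2, u + 1 + (u + 1) = 0 := by decide
      exact this _
    · refine Prod.ext ?_ ?_
      · show wD n (.sr ((e.val : ℕ) : ZMod (2 * n))) = Sum.inr e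
        rw [wD_sr]
        congr 1
        rw [map_natCast, ZMod.natCast_rightInverse]
      · show hb (Multiplicative.ofAdd (((e.val + 1) % 2 + 2 * h.val : ℕ) : ZMod 4)) = h
        rw [hb, toAdd_ofAdd, ZMod.val_natCast_of_lt (by omega)]
        have : ((e.val + 1) % 2 + 2 * h.val) / 2 = h.val := by omega
        rw [this, ZMod.natCast_rightInverse]

end V8nProof7
namespace V8nProof8
open V8nProof4 V8nProof5 V8nProof6 V8nProof7

variable (n : ℕ) [NeZero n]

lemma isconj_iff (x y : (dd n).ker) :
    IsConj x y ↔ invar n (x : P4 n) = invar n (y : P4 n) := by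
  constructor
  · rw [isConj_iff]
    rintro ⟨c, rfl⟩
    have hc : ((c * x * c⁻¹ : (dd n).ker) : P4 n)
        = (c : P4 n) * (x : P4 n) * (c : P4 n)⁻¹ := rfl
    rw [hc, invar_conj]
  · intro h
    obtain ⟨g, hg, hconj⟩ := invar_sep n (x : P4 n) (y : P4 n) x.2 y.2 h
    rw [isConj_iff]
    exact ⟨⟨g, hg⟩, Subtype.ext hconj⟩

lemma card_T' : Nat.card (T' n) = 2 * n + 6 := by
  rw [Nat.card_prod, Nat.card_sum, Nat.card_zmod, Nat.card_eq_fintype_card,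
    Fintype.card_fin]
  ring

lemma card_conj_ker : Nat.card (ConjClasses (dd n).ker) = 2 * n + 6 := by
  have hsur : ∀ t : T' n, ∃ q : (dd n).ker, invar n (q : P4 n) = t := by
    intro t
    obtain ⟨p, hp, h⟩ := invar_surj n t
    exact ⟨⟨p, hp⟩, h⟩
  choose rep hrep using hsur
  have hbij : Function.Bijective (fun t => ConjClasses.mk (rep t)) := by
    constructor
    · intro t t' h
      rw [ConjClasses.mk_eq_mk_iff_isConj, isconj_iff] at h
      rw [← hrep t, ← hrep t', h]
    · intro c
      obtain ⟨x, rfl⟩ := ConjClasses.exists_rep c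
      refine ⟨invar n (x : P4 n), ?_⟩
      simp only
      rw [ConjClasses.mk_eq_mk_iff_isConj, isconj_iff, hrep]
  rw [← Nat.card_eq_of_bijective _ hbij, card_T']

lemma conj_map_mk {G H : Type*} [Group G] [Group H] (f : G →* H) (x : G) :
    ConjClasses.map f (ConjClasses.mk x) = ConjClasses.mk (f x) := rfl

lemma card_conj_congr {G H : Type*} [Group G] [Group H] (e : G ≃* H) :
    Nat.card (ConjClasses G) = Nat.card (ConjClasses H) := by
  apply Nat.card_eq_of_bijective (ConjClasses.map e.toMonoidHom)
  constructor
  · intro c c' h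
    obtain ⟨x, rfl⟩ := c.exists_rep
    obtain ⟨y, rfl⟩ := c'.exists_rep
    rw [conj_map_mk, conj_map_mk, ConjClasses.mk_eq_mk_iff_isConj] at h
    rw [ConjClasses.mk_eq_mk_iff_isConj]
    have h2 := e.symm.toMonoidHom.map_isConj h
    simpa using h2
  · intro c
    obtain ⟨y, rfl⟩ := c.exists_rep
    refine ⟨ConjClasses.mk (e.symm y), ?_⟩
    rw [conj_map_mk]
    simp

end V8nProof8

theorem stmt_5 (n : ℕ) (hn : 0 < n) (hev : Even n) :
    Nat.card (ConjClasses (V8n n)) = 2 * n + 6 := by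
  haveI : NeZero n := ⟨hn.ne'⟩
  rw [V8nProof8.card_conj_congr (V8nProof5.eqV n hev)]
  exact V8nProof8.card_conj_ker n
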